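/- Let E be a normed real vector space whose norm is C¹ on E \ {0}, C ⊆ E a convex compact subset with 0 ∈ C, and f : C → C a 1-Lipschitz map. For λ ∈ (0,1), let y_λ be the unique fixed point of x ↦ λ f(x). Then the family (y_λ) converges as λ → 1 (to a fixed point ȳ of f characterized by ℓ_{ȳ−y}(ȳ) ≤ 0 for all fixed points y ≠ ȳ). -/

import Mathlib

open Set Filter

section Aux

variable {E : Type*} [NormedAddCommGroup E] [NormedSpace ℝ E]

lemma ylc_diff (hnorm : ContDiffOn ℝ 1 (fun x : E => ‖x‖) {(0:E)}ᶜ) {x : E} (hx : x ≠ 0) :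
    DifferentiableAt ℝ (fun x : E => ‖x‖) x :=
  (hnorm.contDiffAt (isOpen_compl_singleton.mem_nhds (by simpa using hx))).differentiableAt one_ne_zero

lemma ylc_apply_le (x v : E) : fderiv ℝ (fun x : E => ‖x‖) x v ≤ ‖v‖ := by
  calc fderiv ℝ (fun x : E => ‖x‖) x v ≤ ‖fderiv ℝ (fun x : E => ‖x‖) x v‖ := le_abs_self _
    _ ≤ ‖fderiv ℝ (fun x : E => ‖x‖) x‖ * ‖v‖ := (fderiv ℝ (fun x : E => ‖x‖) x).le_opNorm v
    _ ≤ 1 * ‖v‖ := by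
        gcongr
        simpa using norm_fderiv_le_of_lipschitz ℝ (lipschitzWith_one_norm (E := E))
    _ = ‖v‖ := one_mul _

lemma ylc_self (hnorm : ContDiffOn ℝ 1 (fun x : E => ‖x‖) {(0:E)}ᶜ) {x : E} (hx : x ≠ 0) :
    fderiv ℝ (fun x : E => ‖x‖) x x = ‖x‖ := by
  have hd := ylc_diff hnorm hx
  have h1 : HasDerivAt (fun t : ℝ => x + t • x) x 0 := by
    simpa using ((hasDerivAt_id (0:ℝ)).smul_const x).const_add x
  have hd' : HasFDerivAt (fun x : E => ‖x‖) (fderiv ℝ (fun x : E => ‖x‖) x)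
      ((fun t : ℝ => x + t • x) 0) := by simpa using hd.hasFDerivAt
  have h2 : HasDerivAt (fun t : ℝ => ‖x + t • x‖) (fderiv ℝ (fun x : E => ‖x‖) x x) 0 :=
    hd'.comp_hasDerivAt 0 h1
  have h3 : HasDerivAt (fun t : ℝ => (1 + t) * ‖x‖) ‖x‖ 0 := by
    simpa using ((hasDerivAt_id (0:ℝ)).const_add 1).mul_const ‖x‖
  have heq : (fun t : ℝ => (1 + t) * ‖x‖) =ᶠ[nhds (0:ℝ)] fun t : ℝ => ‖x + t • x‖ := by
    have : Ioo (-1 : ℝ) 1 ∈ nhds (0:ℝ) := Ioo_mem_nhds (by norm_num) (by norm_num)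
    filter_upwards [this] with t ht
    have h1t : (0:ℝ) < 1 + t := by linarith [ht.1]
    have : x + t • x = (1 + t) • x := by rw [add_smul, one_smul]
    rw [this, norm_smul, Real.norm_eq_abs, abs_of_pos h1t]
  have h2' : HasDerivAt (fun t : ℝ => (1 + t) * ‖x‖) (fderiv ℝ (fun x : E => ‖x‖) x x) 0 :=
    h2.congr_of_eventuallyEq heq
  exact h2'.unique h3

lemma ylc_neg (hnorm : ContDiffOn ℝ 1 (fun x : E => ‖x‖) {(0:E)}ᶜ) {x : E} (hx : x ≠ 0) (v : E) :
    fderiv ℝ (fun x : E => ‖x‖) (-x) v = - fderiv ℝ (fun x : E => ‖x‖) x v := by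
  have hdx : HasFDerivAt (fun x : E => ‖x‖) (fderiv ℝ (fun x : E => ‖x‖) x)
      ((fun y : E => -y) (-x)) := by simpa using (ylc_diff hnorm hx).hasFDerivAt
  have hneg : HasFDerivAt (fun y : E => -y) (-(ContinuousLinearMap.id ℝ E)) (-x) := by
    exact (hasFDerivAt_id (-x : E)).neg
  have hcomp := hdx.comp (-x) hneg
  have hfun : ((fun x : E => ‖x‖) ∘ fun y : E => -y) = fun x : E => ‖x‖ := by
    ext w; simp [Function.comp, norm_neg]
  rw [hfun] at hcomp
  rw [hcomp.fderiv]
  simp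

lemma ylc_VI (hnorm : ContDiffOn ℝ 1 (fun x : E => ‖x‖) {(0:E)}ᶜ)
    {C : Set E} {f : E → E} (hlip : LipschitzOnWith 1 f C)
    {l : ℝ} (hl : l ∈ Ioo (0:ℝ) 1) {w z : E} (hw : w ∈ C) (hz : z ∈ C)
    (hfz : f z = z) (hfix : l • f w = w) (hne : w ≠ z) :
    fderiv ℝ (fun x : E => ‖x‖) (w - z) w ≤ 0 := by
  set ℓ := fderiv ℝ (fun x : E => ‖x‖) (w - z) with hℓ
  have hsub : w - z ≠ 0 := sub_ne_zero.2 hne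
  have h1 : ℓ (w - z) = ‖w - z‖ := ylc_self hnorm hsub
  have hfw : f w = l⁻¹ • w := by
    have h := smul_smul l⁻¹ l (f w)
    rw [inv_mul_cancel₀ (ne_of_gt hl.1), one_smul, hfix] at h
    exact h.symm
  have h2 : ℓ (f w - z) ≤ ‖w - z‖ := by
    refine (ylc_apply_le _ _).trans ?_
    have hd := hlip.dist_le_mul w hw z hz
    rw [hfz] at hd
    simpa [dist_eq_norm] using hd
  have h3 : ℓ (f w - z) = l⁻¹ * ℓ w - ℓ z := by
    rw [hfw, map_sub, map_smul]; simp
  have h4 : ℓ (w - z) = ℓ w - ℓ z := by rw [map_sub]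
  have hinv : (1:ℝ) < l⁻¹ := (one_lt_inv₀ hl.1).2 hl.2
  have key : l⁻¹ * ℓ w ≤ ℓ w := by
    have := h2
    rw [h3, ← h1, h4] at this
    linarith
  nlinarith

end Aux

theorem ylam_converges_C1_norm
    {E : Type*} [NormedAddCommGroup E] [NormedSpace ℝ E]
    (hnorm : ContDiffOn ℝ 1 (fun x : E => ‖x‖) {(0:E)}ᶜ)
    (C : Set E) (hC : Convex ℝ C) (hCcpt : IsCompact C) (h0 : (0:E) ∈ C)
    (f : E → E) (hf : MapsTo f C C) (hlip : LipschitzOnWith 1 f C)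
    (y : ℝ → E) (hy : ∀ l ∈ Ioo (0:ℝ) 1, y l ∈ C ∧ l • f (y l) = y l) :
    ∃ ybar ∈ C, f ybar = ybar ∧
      Tendsto y (nhdsWithin 1 (Ioo (0:ℝ) 1)) (nhds ybar) ∧
      ∀ z ∈ C, f z = z → z ≠ ybar →
        fderiv ℝ (fun x : E => ‖x‖) (ybar - z) ybar ≤ 0 := by
  set L := nhdsWithin (1:ℝ) (Ioo 0 1) with hLdef
  haveI hLne : L.NeBot := by
    refine mem_closure_iff_nhdsWithin_neBot.1 ?_
    rw [closure_Ioo (by norm_num : (0:ℝ) ≠ 1)]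
    exact right_mem_Icc.2 zero_le_one
  have hIooL : Ioo (0:ℝ) 1 ∈ L := self_mem_nhdsWithin
  have hyC : ∀ᶠ l in L, y l ∈ C := eventually_of_mem hIooL fun l hl => (hy l hl).1
  set P : E → Prop := fun a => ∃ U : Ultrafilter ℝ, ↑U ≤ L ∧ Tendsto y (↑U) (nhds a) with hPdef
  have key : ∀ a, P a → a ∈ C ∧ f a = a ∧
      ∀ z ∈ C, f z = z → z ≠ a → fderiv ℝ (fun x : E => ‖x‖) (a - z) a ≤ 0 := by
    rintro a ⟨U, hUL, hUy⟩
    have hIoo : ∀ᶠ l in (↑U : Filter ℝ), l ∈ Ioo (0:ℝ) 1 := hUL hIooL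
    have hyCU : ∀ᶠ l in (↑U : Filter ℝ), y l ∈ C := hIoo.mono fun l hl => (hy l hl).1
    have haC : a ∈ C := hCcpt.isClosed.mem_of_tendsto hUy hyCU
    have htl : Tendsto (fun l : ℝ => l) (↑U) (nhds 1) :=
      tendsto_id'.2 (le_trans hUL nhdsWithin_le_nhds)
    have hfy : Tendsto (fun l => f (y l)) (↑U) (nhds (f a)) := by
      have hcf : ContinuousWithinAt f C a := hlip.continuousOn a haC
      exact Tendsto.comp hcf (tendsto_nhdsWithin_iff.2 ⟨hUy, hyCU⟩)
    have hfy' : Tendsto (fun l => f (y l)) (↑U) (nhds a) := by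
      have h1 : Tendsto (fun l : ℝ => l⁻¹ • y l) (↑U) (nhds ((1:ℝ)⁻¹ • a)) :=
        (htl.inv₀ one_ne_zero).smul hUy
      rw [inv_one, one_smul] at h1
      refine h1.congr' ?_
      filter_upwards [hIoo] with l hl
      have h2 := (hy l hl).2
      have h := smul_smul l⁻¹ l (f (y l))
      rw [inv_mul_cancel₀ (ne_of_gt hl.1), one_smul, h2] at h
      exact h
    have hfa : f a = a := tendsto_nhds_unique hfy hfy'
    refine ⟨haC, hfa, ?_⟩
    intro z hzC hfz hza
    have hsub : a - z ≠ 0 := sub_ne_zero.2 hza.symm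
    have hcontd : ContinuousOn (fderiv ℝ (fun x : E => ‖x‖)) {(0:E)}ᶜ :=
      hnorm.continuousOn_fderiv_of_isOpen isOpen_compl_singleton le_rfl
    have hconta : ContinuousAt (fderiv ℝ (fun x : E => ‖x‖)) (a - z) :=
      hcontd.continuousAt (isOpen_compl_singleton.mem_nhds (by simpa using hsub))
    have hyz : Tendsto (fun l => y l - z) (↑U) (nhds (a - z)) := hUy.sub tendsto_const_nhds
    have hT : Tendsto (fun l => (fderiv ℝ (fun x : E => ‖x‖) (y l - z)) (y l)) (↑U)
        (nhds ((fderiv ℝ (fun x : E => ‖x‖) (a - z)) a)) := by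
      have hpair : Tendsto (fun l => (fderiv ℝ (fun x : E => ‖x‖) (y l - z), y l)) (↑U)
          (nhds (fderiv ℝ (fun x : E => ‖x‖) (a - z), a)) :=
        (hconta.tendsto.comp hyz).prodMk_nhds hUy
      exact (isBoundedBilinearMap_apply.continuous.tendsto _).comp hpair
    refine le_of_tendsto hT ?_
    filter_upwards [hIoo, hyCU, hUy.eventually (eventually_ne_nhds hza.symm)] with l hl hlC hlne
    exact ylc_VI hnorm hlip hl hlC hzC hfz (hy l hl).2 hlne
  have huniq : ∀ a b, P a → P b → a = b := by
    intro a b ha hb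
    by_contra hab
    obtain ⟨haC, hfa, hVIa⟩ := key a ha
    obtain ⟨hbC, hfb, hVIb⟩ := key b hb
    have hsub : a - b ≠ 0 := sub_ne_zero.2 hab
    have h1 : fderiv ℝ (fun x : E => ‖x‖) (a - b) a ≤ 0 := hVIa b hbC hfb (Ne.symm hab)
    have h2 : fderiv ℝ (fun x : E => ‖x‖) (b - a) b ≤ 0 := hVIb a haC hfa hab
    have h3 : fderiv ℝ (fun x : E => ‖x‖) (b - a) b
        = - fderiv ℝ (fun x : E => ‖x‖) (a - b) b := by
      have := ylc_neg hnorm hsub b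
      rw [neg_sub] at this
      exact this
    have h4 : fderiv ℝ (fun x : E => ‖x‖) (a - b) (a - b) = ‖a - b‖ := ylc_self hnorm hsub
    have h5 : fderiv ℝ (fun x : E => ‖x‖) (a - b) (a - b)
        = fderiv ℝ (fun x : E => ‖x‖) (a - b) a - fderiv ℝ (fun x : E => ‖x‖) (a - b) b :=
      map_sub _ _ _
    have h6 : ‖a - b‖ ≤ 0 := by rw [← h4, h5]; linarith
    exact hab (sub_eq_zero.1 (norm_le_zero_iff.1 h6))
  have hmapP : map y L ≤ 𝓟 C := le_principal_iff.2 hyC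
  obtain ⟨a, haC0, hacp⟩ := hCcpt.exists_clusterPt hmapP
  have hPa : P a := mapClusterPt_iff_ultrafilter.1 hacp
  obtain ⟨haC, hfa, hVIa⟩ := key a hPa
  refine ⟨a, haC, hfa, ?_, fun z hz hz1 hz2 => hVIa z hz hz1 hz2⟩
  by_contra hnt
  rw [Metric.tendsto_nhds] at hnt
  push_neg at hnt
  obtain ⟨ε, hε, hfreq⟩ := hnt
  have hfreq' : ∃ᶠ l in L, ε ≤ dist (y l) a := by
    exact hfreq
  haveI hL'ne : (L ⊓ 𝓟 {l | ε ≤ dist (y l) a}).NeBot := frequently_iff_neBot.1 hfreq'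
  set K := C ∩ {x | ε ≤ dist x a} with hKdef
  have hKcl : IsClosed {x : E | ε ≤ dist x a} :=
    isClosed_le continuous_const (continuous_id.dist continuous_const)
  have hK : IsCompact K := hCcpt.inter_right hKcl
  have hmap' : map y (L ⊓ 𝓟 {l | ε ≤ dist (y l) a}) ≤ 𝓟 K := by
    refine le_principal_iff.2 ?_
    have h1 : ∀ᶠ l in L ⊓ 𝓟 {l | ε ≤ dist (y l) a}, y l ∈ C :=
      hyC.filter_mono inf_le_left
    have h2 : ∀ᶠ l in L ⊓ 𝓟 {l | ε ≤ dist (y l) a}, ε ≤ dist (y l) a :=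
      eventually_inf_principal.2 (Eventually.of_forall fun l hl => hl)
    exact (h1.and h2).mono fun l hl => ⟨hl.1, hl.2⟩
  obtain ⟨b, hbK, hbcp⟩ := hK.exists_clusterPt hmap'
  have hPb : P b := by
    obtain ⟨U, hU1, hU2⟩ := mapClusterPt_iff_ultrafilter.1 hbcp
    exact ⟨U, hU1.trans inf_le_left, hU2⟩
  have hba : a = b := huniq a b hPa hPb
  have : ε ≤ dist b a := hbK.2
  rw [← hba, dist_self] at this
  linarith
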